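/- Let f be a continuous circle map without periodic points, and let P be a minimal set of f. Then P is disjoint from Con(f), the set of points of S¹ having a neighbourhood on which f is constant. -/
import Mathlib


/-- `Con(f)`: points with a neighbourhood on which `f` is constant. -/
def ConSet (f : AddCircle (1 : ℝ) → AddCircle (1 : ℝ)) : Set (AddCircle (1 : ℝ)) :=
  {θ | ∃ U : Set (AddCircle (1 : ℝ)), IsOpen U ∧ θ ∈ U ∧ ∀ ν ∈ U, f ν = f θ}

theorem minimal_set_disjoint_con
    (f : AddCircle (1 : ℝ) → AddCircle (1 : ℝ)) (hf : Continuous f)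
    (hnoper : ¬ ∃ (θ : AddCircle (1 : ℝ)) (n : ℕ), 1 ≤ n ∧ f^[n] θ = θ)
    (P : Set (AddCircle (1 : ℝ))) (hPne : P.Nonempty) (hPcl : IsClosed P)
    (hPinv : f '' P = P)
    (hPmin : ∀ θ ∈ P, P ⊆ closure (Set.range fun n : ℕ => f^[n] θ)) :
    Disjoint P (ConSet f) := by
  rw [Set.disjoint_left]
  intro θ hθP hθCon
  obtain ⟨U, hUopen, hθU, hconst⟩ := hθCon
  have hfθP : f θ ∈ P := hPinv ▸ Set.mem_image_of_mem f hθP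
  have hdense : θ ∈ closure (Set.range fun n : ℕ => f^[n] (f θ)) :=
    hPmin (f θ) hfθP hθP
  rw [mem_closure_iff] at hdense
  obtain ⟨x, hxU, n, hxn⟩ := hdense U hUopen hθU
  apply hnoper
  refine ⟨f θ, n + 1, by omega, ?_⟩
  have : f (f^[n] (f θ)) = f θ := by
    have hx : f^[n] (f θ) = x := hxn
    rw [hx]; exact hconst x hxU
  rw [Function.iterate_succ_apply']
  exact this
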